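/- Let p be a prime, let A be a commutative ring that is an algebra over the p-adic integers ℤ_p, let s ≥ 1 be an integer, and let π ∈ A satisfy π^{s} ∈ p·A. Let n ≥ 1, let k = (k_1, …, k_n) ∈ ℕⁿ with k ≠ (0,…,0), let |k| = k_1 + ⋯ + k_n, and let 1 ≤ i ≤ n. Then for every a ∈ K^i(k, A) with d a = 0 there exists b ∈ K^{i−1}(k, A) with d b = π^{s·|k|} • a. (This is the quantitative version, in monomial weight k, of Remark 2.4 (Remark AFF3.1) of the paper: for β > α the image of H^i_dR(R^+_β) → H^i_dR(R^+_α), i ≥ 1, is killed by a power of p depending only on β − α, with π playing the role of [p̃^{β−α}].) -/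

import Mathlib

/-- The degree-`i` part of the weight-`k` monomial piece of the de Rham complex of the
polynomial ring in `n` variables: families indexed by `i`-element subsets of `Fin n`. -/
abbrev Kform (n i : ℕ) (M : Type*) : Type _ :=
  {s : Finset (Fin n) // s.card = i} → M

/-- The differential of the weight-`k` monomial complex:
`(d a)_L = ∑ₜ (−1)ᵗ · k_{lₜ} • a_{L ∖ {lₜ}}` for `L = {l₀ < l₁ < ⋯ < lᵢ}`. -/
noncomputable def Kd {n : ℕ} {M : Type*} [AddCommGroup M] (k : Fin n → ℕ) {i : ℕ}
    (a : Kform n i M) : Kform n (i + 1) M := fun L =>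
  ∑ j ∈ L.1.attach,
    ((-1 : ℤ) ^ (L.1.filter (fun x => x < j.1)).card * (k j.1 : ℤ)) •
      a ⟨L.1.erase j.1, by rw [Finset.card_erase_of_mem j.2, L.2]; rfl⟩

noncomputable def aext {n i : ℕ} {M : Type*} [AddCommGroup M] (a : Kform n i M)
    (t : Finset (Fin n)) : M :=
  if h : t.card = i then a ⟨t, h⟩ else 0

lemma aext_apply {n i : ℕ} {M : Type*} [AddCommGroup M] (a : Kform n i M)
    (t : Finset (Fin n)) (h : t.card = i) : aext a t = a ⟨t, h⟩ := dif_pos h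

lemma Kd_apply {n : ℕ} {M : Type*} [AddCommGroup M] (k : Fin n → ℕ) {i : ℕ}
    (a : Kform n i M) (L : {s : Finset (Fin n) // s.card = i + 1}) :
    Kd k a L = ∑ t ∈ L.1,
      ((-1 : ℤ) ^ (L.1.filter (fun x => x < t)).card * (k t : ℤ)) • aext a (L.1.erase t) := by
  rw [Kd, ← Finset.sum_attach L.1 (fun t => ((-1 : ℤ) ^ (L.1.filter (fun x => x < t)).card * (k t : ℤ)) • aext a (L.1.erase t))]
  refine Finset.sum_congr rfl fun t _ => ?_
  rw [aext_apply a _ (by rw [Finset.card_erase_of_mem t.2, L.2]; rfl)]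

/-- contraction homotopy -/
noncomputable def Kh {n : ℕ} {M : Type*} [AddCommGroup M] (j : Fin n) {i : ℕ}
    (a : Kform n (i + 1) M) : Kform n i M := fun J =>
  if j ∈ J.1 then 0
  else ((-1 : ℤ) ^ (J.1.filter (fun x => x < j)).card) • aext a (insert j J.1)

lemma aext_Kh {n : ℕ} {M : Type*} [AddCommGroup M] (j : Fin n) {i : ℕ}
    (a : Kform n (i + 1) M) (t : Finset (Fin n)) (h : t.card = i) :
    aext (Kh j a) t =
      if j ∈ t then 0
      else ((-1 : ℤ) ^ (t.filter (fun x => x < j)).card) • aext a (insert j t) := by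
  rw [aext_apply _ _ h, Kh]

lemma Kdh {n : ℕ} {M : Type*} [AddCommGroup M] (k : Fin n → ℕ) (j : Fin n) {i : ℕ}
    (a : Kform n (i + 1) M) (ha : Kd k a = 0) :
    Kd k (Kh j a) = fun L => (k j : ℤ) • aext a L.1 := by
  funext L
  rw [Kd_apply]
  by_cases hj : j ∈ L.1
  · -- only the t = j term survives
    rw [Finset.sum_eq_single_of_mem j hj]
    · rw [aext_Kh _ _ _ (by rw [Finset.card_erase_of_mem hj, L.2]; rfl),
        if_neg (Finset.notMem_erase j L.1), Finset.insert_erase hj,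
        Finset.filter_erase]
      have hjj : j ∉ Finset.filter (fun x => x < j) L.1 := by simp
      rw [Finset.erase_eq_of_notMem hjj, smul_smul]
      congr 1
      rw [mul_right_comm, ← pow_add, ← two_mul, pow_mul, neg_one_sq, one_pow, one_mul]
    · intro t ht htj
      rw [aext_Kh _ _ _ (by rw [Finset.card_erase_of_mem ht, L.2]; rfl),
        if_pos (Finset.mem_erase.2 ⟨Ne.symm htj, hj⟩), smul_zero]
  · -- use closedness at insert j L
    have hins : (insert j L.1).card = (i + 1) + 1 := by
      rw [Finset.card_insert_of_notMem hj, L.2]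
    have hcl : Kd k a ⟨insert j L.1, hins⟩ = 0 := by rw [ha]; rfl
    rw [Kd_apply] at hcl
    rw [Finset.sum_insert hj] at hcl
    have herasej : (insert j L.1).erase j = L.1 := Finset.erase_insert hj
    set ε : ℤ := (-1 : ℤ) ^ (L.1.filter (fun x => x < j)).card with hε
    have hfj : (insert j L.1).filter (fun x => x < j) = L.1.filter (fun x => x < j) := by
      rw [Finset.filter_insert, if_neg (lt_irrefl j)]
    -- term at j in hcl
    rw [herasej, hfj] at hcl
    -- now show each term of our sum equals -ε • corresponding term
    have key : ∀ t ∈ L.1,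
        ((-1 : ℤ) ^ (L.1.filter (fun x => x < t)).card * (k t : ℤ)) • aext (Kh j a) (L.1.erase t)
        = (-ε) • (((-1 : ℤ) ^ ((insert j L.1).filter (fun x => x < t)).card * (k t : ℤ)) •
            aext a ((insert j L.1).erase t)) := by
      intro t ht
      have htj : t ≠ j := fun h => hj (h ▸ ht)
      have h1 : (insert j L.1).erase t = insert j (L.1.erase t) :=
        Finset.erase_insert_of_ne htj.symm
      have h2 : j ∉ L.1.erase t := fun h => hj (Finset.mem_of_mem_erase h)
      rw [aext_Kh _ _ _ (by rw [Finset.card_erase_of_mem ht, L.2]; rfl), if_neg h2, h1,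
        smul_smul, smul_smul]
      congr 1
      have hfe : (L.1.erase t).filter (fun x => x < j) = (L.1.filter (fun x => x < j)).erase t := by
        rw [Finset.filter_erase]
      rcases (lt_or_gt_of_ne htj) with hlt | hgt
      · -- t < j
        have hmem : t ∈ L.1.filter (fun x => x < j) := Finset.mem_filter.2 ⟨ht, hlt⟩
        have hc : ((L.1.filter (fun x => x < j)).erase t).card
            = (L.1.filter (fun x => x < j)).card - 1 := Finset.card_erase_of_mem hmem
        have hpos : 1 ≤ (L.1.filter (fun x => x < j)).card := Finset.card_pos.2 ⟨t, hmem⟩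
        have hft : (insert j L.1).filter (fun x => x < t) = L.1.filter (fun x => x < t) := by
          rw [Finset.filter_insert, if_neg (not_lt.2 hlt.le)]
        rw [hfe, hc, hft, hε]
        generalize (Finset.filter (fun x => x < j) L.1).card = c at hpos ⊢
        obtain ⟨m, rfl⟩ : ∃ m, c = m + 1 := ⟨c - 1, by omega⟩
        simp only [Nat.add_sub_cancel]
        rw [pow_succ]; ring
      · -- j < t
        have hnmem : t ∉ L.1.filter (fun x => x < j) := by
          simp only [Finset.mem_filter, not_and]
          exact fun _ => not_lt.2 hgt.le
        have hjn : j ∉ L.1.filter (fun x => x < t) := by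
          simp only [Finset.mem_filter, not_and]
          exact fun h => absurd h hj
        have hft : (insert j L.1).filter (fun x => x < t) = insert j (L.1.filter (fun x => x < t)) := by
          rw [Finset.filter_insert, if_pos hgt]
        rw [hfe, Finset.erase_eq_of_notMem hnmem, hft, Finset.card_insert_of_notMem hjn, hε,
          pow_succ]
        ring
    rw [Finset.sum_congr rfl key, ← Finset.smul_sum]
    have hsum : ∑ t ∈ L.1, ((-1 : ℤ) ^ ((insert j L.1).filter (fun x => x < t)).card * (k t : ℤ)) •
        aext a ((insert j L.1).erase t) = -((ε * (k j : ℤ)) • aext a L.1) := by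
      exact eq_neg_of_add_eq_zero_right hcl
    rw [hsum, smul_neg, neg_smul, neg_neg, smul_smul]
    congr 1
    rw [hε, ← mul_assoc, ← pow_add, ← two_mul, pow_mul, neg_one_sq, one_pow, one_mul]

lemma pdvd (p : ℕ) [hp : Fact p.Prime] (m K : ℕ) (hm : m ≠ 0) (hmK : m ≤ K) :
    ∃ w : ℤ_[p], (p : ℤ_[p]) ^ K = (m : ℤ_[p]) * w := by
  set v := m.factorization p with hv
  have hvd : p ^ v ∣ m := Nat.ordProj_dvd m p
  set u := m / p ^ v with hu
  have hmu : p ^ v * u = m := Nat.ordProj_mul_ordCompl_eq_self m p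
  have hnd : ¬ p ∣ u := Nat.not_dvd_ordCompl hp.out hm
  have hunit : IsUnit (u : ℤ_[p]) := by
    rw [PadicInt.isUnit_iff]
    refine le_antisymm (PadicInt.norm_le_one _) (not_lt.1 ?_)
    intro hlt
    have : ‖((u : ℤ) : ℤ_[p])‖ < 1 := by push_cast; exact hlt
    rw [PadicInt.norm_int_lt_one_iff_dvd] at this
    exact hnd (Int.ofNat_dvd.1 this)
  have hvK : v ≤ K := by
    have h1 : v < p ^ v := Nat.lt_pow_self hp.out.one_lt
    have h2 : p ^ v ≤ m := Nat.le_of_dvd (Nat.pos_of_ne_zero hm) hvd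
    omega
  obtain ⟨uu, huu⟩ := hunit
  refine ⟨(uu⁻¹ : ℤ_[p]ˣ) * (p : ℤ_[p]) ^ (K - v), ?_⟩
  have hcast : ((m : ℕ) : ℤ_[p]) = (p : ℤ_[p]) ^ v * (u : ℤ_[p]) := by
    rw [← hmu]; push_cast; ring
  have hsplit : (p : ℤ_[p]) ^ K = (p : ℤ_[p]) ^ v * (p : ℤ_[p]) ^ (K - v) := by
    rw [← pow_add]; congr 1; omega
  have hinv : (uu : ℤ_[p]) * ((uu⁻¹ : ℤ_[p]ˣ) : ℤ_[p]) = 1 := by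
    rw [← Units.val_mul, mul_inv_cancel, Units.val_one]
  rw [hcast, ← huu, hsplit]
  calc (p : ℤ_[p]) ^ v * (p : ℤ_[p]) ^ (K - v)
      = (p : ℤ_[p]) ^ v * ((uu : ℤ_[p]) * ((uu⁻¹ : ℤ_[p]ˣ) : ℤ_[p])) * (p : ℤ_[p]) ^ (K - v) := by
        rw [hinv, mul_one]
    _ = (p : ℤ_[p]) ^ v * (uu : ℤ_[p]) * (((uu⁻¹ : ℤ_[p]ˣ) : ℤ_[p]) * (p : ℤ_[p]) ^ (K - v)) := by ring

lemma Kd_mul {n i : ℕ} {A : Type*} [CommRing A] (k : Fin n → ℕ) (r : A) (b : Kform n i A) :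
    Kd k (fun J => r * b J) = fun L => r * Kd k b L := by
  funext L
  rw [Kd, Kd, Finset.mul_sum]
  refine Finset.sum_congr rfl fun t _ => ?_
  rw [zsmul_eq_mul, zsmul_eq_mul]
  ring


/-- quantitative version, Remark 2.4 of the paper, in monomial weight `k`:
if `A` is a `ℤ_p`-algebra, `s ≥ 1`, and `π ∈ A` satisfies `π^s ∈ p·A`, then every closed
`a ∈ K^i(k, A)` with `k ≠ 0` becomes exact after multiplication by `π^{s·|k|}`. -/
theorem statement6 (p : ℕ) [Fact p.Prime] (A : Type*) [CommRing A] [Algebra ℤ_[p] A]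
    (s : ℕ) (hs : 1 ≤ s) (π : A) (hπ : ∃ c : A, π ^ s = (p : A) * c)
    (n : ℕ) (hn : 1 ≤ n) (k : Fin n → ℕ) (hk : k ≠ 0)
    (i : ℕ) (hi : i + 1 ≤ n)
    (a : Kform n (i + 1) A) (ha : Kd k a = 0) :
    ∃ b : Kform n i A, Kd k b = fun L => π ^ (s * ∑ j, k j) * a L := by
  obtain ⟨c, hc⟩ := hπ
  have : ∃ j, k j ≠ 0 := by
    by_contra h
    push_neg at h
    exact hk (funext h)
  obtain ⟨j, hj⟩ := this
  set K := ∑ j, k j with hK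
  have hjK : k j ≤ K := Finset.single_le_sum (fun t _ => Nat.zero_le (k t)) (Finset.mem_univ j)
  obtain ⟨w, hw⟩ := pdvd p (k j) K hj hjK
  refine ⟨fun J => (algebraMap ℤ_[p] A w * c ^ K) * Kh j a J, ?_⟩
  rw [Kd_mul, Kdh k j a ha]
  funext L
  have haext : aext a L.1 = a L := by
    rw [aext_apply a L.1 L.2]
  simp only [haext, zsmul_eq_mul]
  have h1 : ((k j : ℤ) : A) = algebraMap ℤ_[p] A ((k j : ℕ) : ℤ_[p]) := by
    simp
  have h2 : algebraMap ℤ_[p] A w * ((k j : ℤ) : A) = (p : A) ^ K := by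
    rw [h1, ← map_mul, mul_comm w, ← hw, map_pow, map_natCast]
  have h3 : π ^ (s * K) = (p : A) ^ K * c ^ K := by
    rw [pow_mul, hc, mul_pow]
  calc algebraMap ℤ_[p] A w * c ^ K * (((k j : ℤ) : A) * a L)
      = (algebraMap ℤ_[p] A w * ((k j : ℤ) : A)) * c ^ K * a L := by ring
    _ = π ^ (s * K) * a L := by rw [h2, h3]
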